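/- PCA gradient Lipschitz bound: let A be a real symmetric n×n matrix, x a unit vector in ℝ^n, and for s in the tangent space T_x = {s : xᵀs = 0}, define f̂_x(s) = (x+s)ᵀA(x+s) / (2(1+‖s‖²)). Then its gradient ∇f̂_x (computed within T_x) satisfies ‖∇f̂_x(s) − ∇f̂_x(0)‖ ≤ (5/2)‖A‖‖s‖ for all s ∈ T_x, where ‖A‖ is the operator norm of A. -/

import Mathlib

open RealInnerProductSpace

theorem stmt_10 {E : Type*} [NormedAddCommGroup E] [InnerProductSpace ℝ E]
    [CompleteSpace E]
    (T : E →L[ℝ] E) (hT : IsSelfAdjoint T) (x : E) (hx : ‖x‖ = 1)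
    (fhat : E → ℝ)
    (hf : ∀ s, fhat s = (1 / (1 + ‖s‖ ^ 2)) * ((1 / 2) * ⟪T (x + s), x + s⟫))
    (grad : E → E)
    (hg : ∀ s, grad s =
      (1 / (1 + ‖s‖ ^ 2)) • ((T (x + s) - ⟪x, T (x + s)⟫ • x) - (2 * fhat s) • s)) :
    ∀ s : E, ⟪x, s⟫ = 0 → ‖grad s - grad 0‖ ≤ (5 / 2) * ‖T‖ * ‖s‖ := by
  intro s hs
  have ha0 : (0:ℝ) ≤ ‖s‖ := norm_nonneg s
  have hpos : (0:ℝ) < 1 + ‖s‖ ^ 2 := by positivity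
  set c : ℝ := 1 / (1 + ‖s‖ ^ 2) with hc
  have hc0 : 0 < c := by positivity
  have hc1 : c ≤ 1 := by
    rw [hc, div_le_one hpos]; nlinarith
  have hcmul : c * (1 + ‖s‖ ^ 2) = 1 := by
    rw [hc, one_div, inv_mul_cancel₀ hpos.ne']
  -- projection bound
  have proj : ∀ v : E, ‖v - ⟪x, v⟫ • x‖ ≤ ‖v‖ := by
    intro v
    have h2 : ‖v - ⟪x, v⟫ • x‖ ^ 2 = ‖v‖ ^ 2 - ⟪x, v⟫ ^ 2 := by
      rw [norm_sub_sq_real, real_inner_smul_right, norm_smul, real_inner_comm]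
      simp [hx, Real.norm_eq_abs, mul_pow, sq_abs]
      ring
    nlinarith [norm_nonneg (v - ⟪x, v⟫ • x), norm_nonneg v, sq_nonneg (⟪x, v⟫)]
  -- norm of x + s
  have hxs : ‖x + s‖ ^ 2 = 1 + ‖s‖ ^ 2 := by
    rw [norm_add_sq_real, hs, hx]; ring
  -- fhat bound
  have hfb : |fhat s| ≤ ‖T‖ / 2 := by
    rw [hf]
    have h1 : |⟪T (x + s), x + s⟫| ≤ ‖T‖ * (1 + ‖s‖ ^ 2) := by
      calc |⟪T (x + s), x + s⟫| ≤ ‖T (x + s)‖ * ‖x + s‖ := abs_real_inner_le_norm _ _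
        _ ≤ (‖T‖ * ‖x + s‖) * ‖x + s‖ := by
            gcongr; exact T.le_opNorm _
        _ = ‖T‖ * (1 + ‖s‖ ^ 2) := by rw [mul_assoc, ← sq, hxs]
    rw [abs_mul, abs_mul, abs_of_pos (show (0:ℝ) < 1 / (1 + ‖s‖ ^ 2) from hc0),
      abs_of_pos (show (0:ℝ) < (1:ℝ)/2 by norm_num)]
    calc 1 / (1 + ‖s‖ ^ 2) * (1 / 2 * |⟪T (x + s), x + s⟫|)
        ≤ 1 / (1 + ‖s‖ ^ 2) * (1 / 2 * (‖T‖ * (1 + ‖s‖ ^ 2))) := by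
          gcongr
      _ = ‖T‖ / 2 := by
          field_simp
  -- grad 0
  have hg0 : grad 0 = T x - ⟪x, T x⟫ • x := by
    rw [hg]; simp
  -- decomposition
  have hdec : grad s - grad 0 =
      c • (T s - ⟪x, T s⟫ • x) + (c - 1) • (T x - ⟪x, T x⟫ • x) - (2 * fhat s * c) • s := by
    rw [hg s, hg0]
    have hadd : T (x + s) = T x + T s := map_add T x s
    rw [hadd, inner_add_right]
    module
  rw [hdec]
  have b1 : ‖c • (T s - ⟪x, T s⟫ • x)‖ ≤ ‖T‖ * ‖s‖ := by
    rw [norm_smul, Real.norm_eq_abs, abs_of_pos hc0]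
    calc c * ‖T s - ⟪x, T s⟫ • x‖ ≤ 1 * ‖T s‖ := by
          apply mul_le_mul hc1 (proj _) (norm_nonneg _) zero_le_one
      _ = ‖T s‖ := one_mul _
      _ ≤ ‖T‖ * ‖s‖ := T.le_opNorm s
  have b2 : ‖(c - 1) • (T x - ⟪x, T x⟫ • x)‖ ≤ (‖s‖ / 2) * ‖T‖ := by
    rw [norm_smul, Real.norm_eq_abs]
    have h1 : |c - 1| ≤ ‖s‖ / 2 := by
      rw [abs_sub_comm, abs_of_nonneg (by linarith : (0:ℝ) ≤ 1 - c)]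
      have : 1 - c = ‖s‖ ^ 2 / (1 + ‖s‖ ^ 2) := by
        rw [hc]; field_simp; ring
      rw [this, div_le_iff₀ hpos]
      nlinarith [sq_nonneg (‖s‖ - 1)]
    have h2 : ‖T x - ⟪x, T x⟫ • x‖ ≤ ‖T‖ := by
      calc ‖T x - ⟪x, T x⟫ • x‖ ≤ ‖T x‖ := proj _
        _ ≤ ‖T‖ * ‖x‖ := T.le_opNorm x
        _ = ‖T‖ := by rw [hx, mul_one]
    exact mul_le_mul h1 h2 (norm_nonneg _) (by positivity)
  have b3 : ‖(2 * fhat s * c) • s‖ ≤ ‖T‖ * ‖s‖ := by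
    rw [norm_smul, Real.norm_eq_abs, abs_mul, abs_mul]
    have hb : |(2:ℝ)| * |fhat s| * |c| ≤ ‖T‖ := by
      rw [abs_of_pos (show (0:ℝ) < 2 by norm_num), abs_of_pos hc0]
      nlinarith [abs_nonneg (fhat s)]
    exact mul_le_mul_of_nonneg_right hb ha0
  calc ‖c • (T s - ⟪x, T s⟫ • x) + (c - 1) • (T x - ⟪x, T x⟫ • x) - (2 * fhat s * c) • s‖
      ≤ ‖c • (T s - ⟪x, T s⟫ • x) + (c - 1) • (T x - ⟪x, T x⟫ • x)‖ + ‖(2 * fhat s * c) • s‖ :=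
        norm_sub_le _ _
    _ ≤ (‖c • (T s - ⟪x, T s⟫ • x)‖ + ‖(c - 1) • (T x - ⟪x, T x⟫ • x)‖) + ‖(2 * fhat s * c) • s‖ := by
        gcongr; exact norm_add_le _ _
    _ ≤ (‖T‖ * ‖s‖ + (‖s‖ / 2) * ‖T‖) + ‖T‖ * ‖s‖ := add_le_add (add_le_add b1 b2) b3
    _ = (5 / 2) * ‖T‖ * ‖s‖ := by ring
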